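/- Let b ≥ a > 0 and m ≥ 0. Suppose f : (0,∞) → [0,∞) is nonnegative, nondecreasing on (0,b), and f(x) ≥ m for all x ≥ b, with finite Laplace transform Lf(ξ) = ∫_0^∞ e^{-ξx} f(x) dx. Then for every ξ > 0, f(a) ≤ (e^{aξ} ξ Lf(ξ) − m e^{−(b−a)ξ}) / (1 − e^{−(b−a)ξ}), provided b > a. -/

import Mathlib

open Real MeasureTheory Set

lemma aux_int_Ioi (ξ c : ℝ) (hξ : 0 < ξ) :
    (∫ x in Set.Ioi c, Real.exp (-ξ*x)) = Real.exp (-ξ*c) / ξ := by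
  have h := integral_Ioi_of_hasDerivAt_of_tendsto
    (f := fun x => -Real.exp (-ξ*x)/ξ) (f' := fun x => Real.exp (-ξ*x)) (a := c) (m := 0)
    ?_ ?_ ?_ ?_
  · rw [h]; ring
  · exact (by fun_prop : Continuous fun x : ℝ => -Real.exp (-ξ*x)/ξ).continuousWithinAt
  · intro x _
    have h1 : HasDerivAt (fun y : ℝ => -ξ*y) (-ξ) x := by
      simpa using (hasDerivAt_id x).const_mul (-ξ)
    have h3 := (h1.exp.neg).div_const ξ
    convert h3 using 1
    have hξ' : ξ ≠ 0 := hξ.ne'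
    case e'_4 => rfl
    case e'_8 => rfl
    case e'_9 => field_simp
  · exact exp_neg_integrableOn_Ioi c hξ
  · have h0 : Filter.Tendsto (fun x : ℝ => -ξ*x) Filter.atTop Filter.atBot :=
      (Filter.tendsto_const_mul_atBot_of_neg (by linarith)).mpr Filter.tendsto_id
    have := Real.tendsto_exp_atBot.comp h0
    have := (this.neg).div_const ξ
    simpa using this

theorem stmt5 (a b m : ℝ) (ha : 0 < a) (hab : a < b) (hm : 0 ≤ m)
    (f : ℝ → ℝ) (hnonneg : ∀ x > 0, 0 ≤ f x)
    (hmono : MonotoneOn f (Set.Ioo 0 b))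
    (hlb : ∀ x, b ≤ x → m ≤ f x)
    (ξ : ℝ) (hξ : 0 < ξ)
    (hint : IntegrableOn (fun x => Real.exp (-ξ*x) * f x) (Set.Ioi 0)) :
    f a ≤ (Real.exp (a*ξ) * ξ * (∫ x in Set.Ioi (0:ℝ), Real.exp (-ξ*x) * f x)
        - m * Real.exp (-((b-a)*ξ))) / (1 - Real.exp (-((b-a)*ξ))) := by
  set g : ℝ → ℝ := fun x => Real.exp (-ξ*x) * f x with hg
  have hb0 : 0 < b := ha.trans hab
  have hgnn : ∀ x ∈ Set.Ioi (0:ℝ), 0 ≤ g x := fun x hx =>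
    mul_nonneg (Real.exp_nonneg _) (hnonneg x hx)
  have hsplit : (∫ x in Set.Ioi (0:ℝ), g x)
      = (∫ x in Set.Ioc (0:ℝ) b, g x) + ∫ x in Set.Ioi b, g x := by
    rw [← setIntegral_union (Set.Ioc_disjoint_Ioi le_rfl) measurableSet_Ioi
      (hint.mono_set Set.Ioc_subset_Ioi_self) (hint.mono_set (Set.Ioi_subset_Ioi hb0.le)),
      Set.Ioc_union_Ioi_eq_Ioi hb0.le]
  have h1 : f a * ((Real.exp (-ξ*a) - Real.exp (-ξ*b)) / ξ) ≤ ∫ x in Set.Ioc (0:ℝ) b, g x := by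
    have hsub : Set.Ioo a b ⊆ Set.Ioc (0:ℝ) b := fun x hx => ⟨ha.trans hx.1, hx.2.le⟩
    have hexp_int : IntegrableOn (fun x => f a * Real.exp (-ξ*x)) (Set.Ioo a b) :=
      IntegrableOn.mono_set ((exp_neg_integrableOn_Ioi a hξ).const_mul (f a))
        Set.Ioo_subset_Ioi_self
    have step1 : (∫ x in Set.Ioo a b, f a * Real.exp (-ξ*x)) ≤ ∫ x in Set.Ioo a b, g x := by
      apply setIntegral_mono_on hexp_int (hint.mono_set (fun x hx => ha.trans hx.1))
        measurableSet_Ioo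
      intro x hx
      have hfa : f a ≤ f x := hmono ⟨ha, hab⟩ ⟨ha.trans hx.1, hx.2⟩ hx.1.le
      simpa [hg, mul_comm] using mul_le_mul_of_nonneg_left hfa (Real.exp_nonneg (-ξ*x))
    have step2 : (∫ x in Set.Ioo a b, g x) ≤ ∫ x in Set.Ioc (0:ℝ) b, g x := by
      apply setIntegral_mono_set (hint.mono_set (fun x hx => hx.1))
      · filter_upwards [ae_restrict_mem measurableSet_Ioc] with x hx
        exact hgnn x hx.1
      · exact Filter.Eventually.of_forall hsub
    have hcalc : (∫ x in Set.Ioo a b, f a * Real.exp (-ξ*x))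
        = f a * ((Real.exp (-ξ*a) - Real.exp (-ξ*b)) / ξ) := by
      rw [integral_const_mul]
      congr 1
      have e1 : (∫ x in Set.Ioo a b, Real.exp (-ξ*x)) = ∫ x in a..b, Real.exp (-ξ*x) := by
        rw [intervalIntegral.integral_of_le hab.le, integral_Ioc_eq_integral_Ioo]
      rw [e1, intervalIntegral.integral_comp_mul_left Real.exp (by linarith : (-ξ:ℝ) ≠ 0),
        integral_exp, smul_eq_mul]
      ring
    linarith [hcalc ▸ step1.trans step2]
  have h2 : m * (Real.exp (-ξ*b) / ξ) ≤ ∫ x in Set.Ioi b, g x := by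
    have hexp_int : IntegrableOn (fun x => m * Real.exp (-ξ*x)) (Set.Ioi b) :=
      (exp_neg_integrableOn_Ioi b hξ).const_mul m
    have step1 : (∫ x in Set.Ioi b, m * Real.exp (-ξ*x)) ≤ ∫ x in Set.Ioi b, g x := by
      apply setIntegral_mono_on hexp_int (hint.mono_set (Set.Ioi_subset_Ioi hb0.le))
        measurableSet_Ioi
      intro x hx
      simpa [hg, mul_comm] using
        mul_le_mul_of_nonneg_left (hlb x (le_of_lt hx)) (Real.exp_nonneg (-ξ*x))
    calc m * (Real.exp (-ξ*b) / ξ) = ∫ x in Set.Ioi b, m * Real.exp (-ξ*x) := by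
          rw [integral_const_mul, aux_int_Ioi ξ b hξ]
      _ ≤ _ := step1
  have key : f a * (Real.exp (-ξ*a) - Real.exp (-ξ*b)) + m * Real.exp (-ξ*b)
      ≤ ξ * ∫ x in Set.Ioi (0:ℝ), g x := by
    rw [← div_le_iff₀' hξ, hsplit]
    have h' : (f a * (Real.exp (-ξ*a) - Real.exp (-ξ*b)) + m * Real.exp (-ξ*b)) / ξ
        = f a * ((Real.exp (-ξ*a) - Real.exp (-ξ*b)) / ξ) + m * (Real.exp (-ξ*b) / ξ) := by ring
    rw [h']
    exact add_le_add h1 h2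
  have hden : 0 < 1 - Real.exp (-((b-a)*ξ)) := by
    have : Real.exp (-((b-a)*ξ)) < 1 := by
      rw [Real.exp_lt_one_iff]; nlinarith
    linarith
  rw [le_div_iff₀ hden]
  have hmul := mul_le_mul_of_nonneg_left key (Real.exp_nonneg (a*ξ))
  have e0 : Real.exp (a*ξ) * Real.exp (-ξ*a) = 1 := by
    rw [← Real.exp_add, show a*ξ + -ξ*a = 0 by ring, Real.exp_zero]
  have e2 : Real.exp (a*ξ) * Real.exp (-ξ*b) = Real.exp (-((b-a)*ξ)) := by
    rw [← Real.exp_add]; congr 1; ring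
  have expand : Real.exp (a*ξ) * (f a * (Real.exp (-ξ*a) - Real.exp (-ξ*b)) + m * Real.exp (-ξ*b))
      = f a * (1 - Real.exp (-((b-a)*ξ))) + m * Real.exp (-((b-a)*ξ)) := by
    linear_combination f a * e0 + (m - f a) * e2
  have assoc : Real.exp (a*ξ) * (ξ * ∫ x in Set.Ioi (0:ℝ), g x)
      = Real.exp (a*ξ) * ξ * ∫ x in Set.Ioi (0:ℝ), g x := (mul_assoc _ _ _).symm
  linarith [hmul, expand, assoc]
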